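/- Let (Ω, 𝔉, P) be a probability space with filtration (𝔉ₙ)ₙ∈ℕ, and let (θₙ)ₙ∈ℕ be an adapted ℝ^d-valued process with θ₀ equal to a deterministic point θ⁰ ∈ ℝ^d and θ_{n+1} = θₙ + η·vₙ, where η > 0 and each vₙ is 𝔉_{n+1}-measurable and square-integrable. Let F : ℝ^d → ℝ^d be Borel measurable, e ∈ ℝ^d fixed, and C ≥ 0, and suppose that for every n, almost surely: E[vₙ | 𝔉ₙ] = F(θₙ) + e and E[‖vₙ‖² | 𝔉ₙ] ≤ C·‖θₙ − θ⁰‖² + 2·‖F(θₙ)‖² + 2·‖e‖². Let B ≥ 1 and let N be a ℕ-valued random variable geometrically distributed with parameter Γ = B/(B+1) (i.e., P(N = n) = Γⁿ·(1−Γ)), independent of the process (θₙ). Assume ∑ₙ Γⁿ·E‖θₙ − θ⁰‖² < ∞ and ∑ₙ Γⁿ·E‖F(θₙ)‖² < ∞. Then −2η·E⟨e, θ_N − θ⁰⟩ ≤ (−1/B + η²·C)·E‖θ_N − θ⁰‖² + 2η·E⟨F(θ_N), θ_N − θ⁰⟩ + 2η²·E‖F(θ_N)‖² + 2η²·‖e‖²,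 where θ_N denotes the random vector ω ↦ θ_{N(ω)}(ω). -/

import Mathlib

open MeasureTheory RealInnerProductSpace ProbabilityTheory
open scoped ENNReal

section Aux

variable {α : Type*} {m m0 : MeasurableSpace α} {μ : Measure α} [IsProbabilityMeasure μ]
  {E : Type*} [NormedAddCommGroup E] [InnerProductSpace ℝ E] [CompleteSpace E]

omit [IsProbabilityMeasure μ] [CompleteSpace E] in
lemma aux_integrable_inner {f g : α → E} (hf : MemLp f 2 μ) (hg : MemLp g 2 μ) :
    Integrable (fun ω => ⟪f ω, g ω⟫) μ := by
  refine (L2.integrable_inner (𝕜 := ℝ) (hf.toLp f) (hg.toLp g)).congr ?_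
  filter_upwards [hf.coeFn_toLp, hg.coeFn_toLp] with ω h1 h2
  rw [h1, h2]

omit [IsProbabilityMeasure μ] [CompleteSpace E] in
lemma aux_integrable_sq_norm {f : α → E} (hf : MemLp f 2 μ) :
    Integrable (fun ω => ‖f ω‖ ^ 2) μ := by
  have h := hf.norm_rpow two_ne_zero ENNReal.ofNat_ne_top
  rw [memLp_one_iff_integrable] at h
  refine h.congr (ae_of_all _ fun ω => ?_)
  norm_num

lemma aux_condexp_ae_eq_condExpL2 (hm : m ≤ m0) {f : α → E} (hf : MemLp f 2 μ) :
    μ[f|m] =ᵐ[μ] (condExpL2 E ℝ hm (hf.toLp f) : α →₂[μ] E) := by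
  haveI : SigmaFinite (μ.trim hm) := (isFiniteMeasure_trim hm).toSigmaFinite
  refine (ae_eq_condExp_of_forall_setIntegral_eq hm (hf.integrable one_le_two)
    (fun s hs hμs => integrableOn_condExpL2_of_measure_ne_top hm hμs.ne _)
    (fun s hs hμs => ?_) (aestronglyMeasurable_condExpL2 hm _)).symm
  rw [integral_condExpL2_eq hm (hf.toLp f) hs hμs.ne]
  exact setIntegral_congr_ae (hm s hs) (hf.coeFn_toLp.mono fun ω h _ => h)

lemma aux_memℒp_condexp (hm : m ≤ m0) {f : α → E} (hf : MemLp f 2 μ) :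
    MemLp (μ[f|m]) 2 μ :=
  (Lp.memLp ((condExpL2 E ℝ hm (hf.toLp f) : α →₂[μ] E))).ae_eq
    (aux_condexp_ae_eq_condExpL2 hm hf).symm

lemma aux_integral_inner_condexp (hm : m ≤ m0) {f g : α → E} (hf : MemLp f 2 μ)
    (hg : MemLp g 2 μ) (hgm : AEStronglyMeasurable[m] g μ) :
    ∫ ω, ⟪g ω, f ω⟫ ∂μ = ∫ ω, ⟪g ω, (μ[f|m]) ω⟫ ∂μ := by
  have h2 : AEStronglyMeasurable[m] (hg.toLp g : α → E) μ :=
    hgm.congr hg.coeFn_toLp.symm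
  have key := inner_condExpL2_eq_inner_fun (𝕜 := ℝ) hm (hf.toLp f) (hg.toLp g) h2
  rw [L2.inner_def, L2.inner_def] at key
  have e1 : ∫ ω, ⟪g ω, f ω⟫ ∂μ = ∫ ω, ⟪(hf.toLp f : α → E) ω, (hg.toLp g : α → E) ω⟫ ∂μ := by
    refine integral_congr_ae ?_
    filter_upwards [hf.coeFn_toLp, hg.coeFn_toLp] with ω h1 h2
    rw [h1, h2, real_inner_comm]
  have e2 : ∫ ω, ⟪g ω, (μ[f|m]) ω⟫ ∂μ =
      ∫ ω, ⟪(condExpL2 E ℝ hm (hf.toLp f) : α →₂[μ] E) ω, (hg.toLp g : α → E) ω⟫ ∂μ := by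
    refine integral_congr_ae ?_
    filter_upwards [hg.coeFn_toLp, aux_condexp_ae_eq_condExpL2 hm hf] with ω h1 h2
    rw [h1, h2, real_inner_comm]
  rw [e1, e2, key]

end Aux

section Aux2

variable {Ω : Type*} {mΩ : MeasurableSpace Ω} {P : Measure Ω} [IsProbabilityMeasure P]
  {E : Type*} [MeasurableSpace E]
  {θ : ℕ → Ω → E} {N : Ω → ℕ}

omit [IsProbabilityMeasure P] in
lemma aux_meas_comp (hθm : ∀ n, Measurable (θ n)) (hN : Measurable N) :
    Measurable (fun ω => θ (N ω) ω) := by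
  have h : Measurable (fun p : Ω × ℕ => θ p.2 p.1) :=
    measurable_from_prod_countable_left fun n => hθm n
  exact h.comp (measurable_id.prodMk hN)

omit [IsProbabilityMeasure P] in
lemma aux_lintegral_comp (hθm : ∀ n, Measurable (θ n)) (hN : Measurable N)
    (hNindep : IndepFun N (fun ω => fun n => θ n ω) P)
    (g : E → ℝ≥0∞) (hg : Measurable g) :
    ∫⁻ ω, g (θ (N ω) ω) ∂P = ∑' n, P {ω | N ω = n} * ∫⁻ ω, g (θ n ω) ∂P := by
  have hs : ∀ n : ℕ, MeasurableSet {ω | N ω = n} := fun n => hN (measurableSet_singleton n)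
  have hU : (⋃ n, {ω | N ω = n}) = Set.univ := by
    ext ω; simp [Set.mem_iUnion]
  have hd : Pairwise (Function.onFun Disjoint fun n => {ω | N ω = n}) := by
    intro i j hij
    simp only [Function.onFun, Set.disjoint_left]
    rintro ω (h1 : N ω = i) (h2 : N ω = j)
    exact hij (h1 ▸ h2 ▸ rfl)
  calc ∫⁻ ω, g (θ (N ω) ω) ∂P
      = ∫⁻ ω in ⋃ n, {ω | N ω = n}, g (θ (N ω) ω) ∂P := by rw [hU, Measure.restrict_univ]
    _ = ∑' n, ∫⁻ ω in {ω | N ω = n}, g (θ (N ω) ω) ∂P := lintegral_iUnion hs hd _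
    _ = ∑' n, P {ω | N ω = n} * ∫⁻ ω, g (θ n ω) ∂P := by
        refine tsum_congr fun n => ?_
        have e1 : ∫⁻ ω in {ω | N ω = n}, g (θ (N ω) ω) ∂P
            = ∫⁻ ω in {ω | N ω = n}, g (θ n ω) ∂P := by
          refine setLIntegral_congr_fun (hs n) ?_
          intro ω (hω : N ω = n); simp only [hω]
        have e2 : ∫⁻ ω in {ω | N ω = n}, g (θ n ω) ∂P
            = ∫⁻ ω, (({ω | N ω = n}).indicator (fun _ => (1:ℝ≥0∞)) * fun ω => g (θ n ω)) ω ∂P := by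
          rw [← lintegral_indicator (hs n)]
          congr 1; ext ω
          by_cases hω : ω ∈ {ω' | N ω' = n} <;>
            simp [Set.indicator_apply, hω]
        have hX : (({ω | N ω = n}).indicator (fun _ => (1:ℝ≥0∞)))
            = (fun k : ℕ => if k = n then (1:ℝ≥0∞) else 0) ∘ N := by
          ext ω; by_cases hω : N ω = n <;> simp [Set.indicator_apply, hω]
        have hind : IndepFun (({ω | N ω = n}).indicator (fun _ => (1:ℝ≥0∞)))
            (fun ω => g (θ n ω)) P := by
          rw [hX, show (fun ω => g (θ n ω))
              = (fun p : ℕ → E => g (p n)) ∘ (fun ω => fun k => θ k ω) from rfl]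
          exact hNindep.comp (measurable_from_top) (hg.comp (measurable_pi_apply n))
        rw [e1, e2, lintegral_mul_eq_lintegral_mul_lintegral_of_indepFun
          (Measurable.indicator measurable_const (hs n))
          (show Measurable fun ω => g (θ n ω) from hg.comp (hθm n)) hind]
        congr 1
        rw [lintegral_indicator (hs n)]
        simp

lemma aux_integral_comp (hθm : ∀ n, Measurable (θ n)) (hN : Measurable N)
    (hNindep : IndepFun N (fun ω => fun n => θ n ω) P)
    [MeasurableSingletonClass E]
    (ψ : E → ℝ) (hψ : Measurable ψ)
    (hint : Integrable (fun ω => ψ (θ (N ω) ω)) P)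
    (hintn : ∀ n, Integrable (fun ω => ψ (θ n ω)) P) :
    ∫ ω, ψ (θ (N ω) ω) ∂P = ∑' n, (P {ω | N ω = n}).toReal * ∫ ω, ψ (θ n ω) ∂P := by
  have hs : ∀ n : ℕ, MeasurableSet {ω | N ω = n} := fun n => hN (measurableSet_singleton n)
  have hU : (⋃ n, {ω | N ω = n}) = Set.univ := by
    ext ω; simp [Set.mem_iUnion]
  have hd : Pairwise (Function.onFun Disjoint fun n => {ω | N ω = n}) := by
    intro i j hij
    simp only [Function.onFun, Set.disjoint_left]
    rintro ω (h1 : N ω = i) (h2 : N ω = j)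
    exact hij (h1 ▸ h2 ▸ rfl)
  calc ∫ ω, ψ (θ (N ω) ω) ∂P
      = ∫ ω in ⋃ n, {ω | N ω = n}, ψ (θ (N ω) ω) ∂P := by rw [hU, Measure.restrict_univ]
    _ = ∑' n, ∫ ω in {ω | N ω = n}, ψ (θ (N ω) ω) ∂P := by
        refine integral_iUnion hs hd ?_
        rw [hU]; exact hint.integrableOn
    _ = ∑' n, (P {ω | N ω = n}).toReal * ∫ ω, ψ (θ n ω) ∂P := by
        refine tsum_congr fun n => ?_
        have e1 : ∫ ω in {ω | N ω = n}, ψ (θ (N ω) ω) ∂P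
            = ∫ ω in {ω | N ω = n}, ψ (θ n ω) ∂P := by
          refine setIntegral_congr_fun (hs n) ?_
          intro ω (hω : N ω = n); simp [hω]
        have e2 : ∫ ω in {ω | N ω = n}, ψ (θ n ω) ∂P
            = ∫ ω, (({ω | N ω = n}).indicator (fun _ => (1:ℝ)) * fun ω => ψ (θ n ω)) ω ∂P := by
          rw [← integral_indicator (hs n)]
          congr 1; ext ω
          by_cases hω : ω ∈ {ω' | N ω' = n} <;> simp [Set.indicator_apply, hω]
        have hX : (({ω | N ω = n}).indicator (fun _ => (1:ℝ)))
            = (fun k : ℕ => if k = n then (1:ℝ) else 0) ∘ N := by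
          ext ω; by_cases hω : N ω = n <;> simp [Set.indicator_apply, hω]
        have hind : IndepFun (({ω | N ω = n}).indicator (fun _ => (1:ℝ)))
            (fun ω => ψ (θ n ω)) P := by
          rw [hX]
          exact hNindep.comp (measurable_from_top) (hψ.comp (measurable_pi_apply n))
        have hXint : Integrable (({ω | N ω = n}).indicator (fun _ => (1:ℝ))) P :=
          (integrable_const (1:ℝ)).indicator (hs n)
        rw [e1, e2, hind.integral_mul_eq_mul_integral hXint.aestronglyMeasurable (hintn n).aestronglyMeasurable]
        congr 1
        rw [integral_indicator_const (1:ℝ) (hs n), smul_eq_mul, mul_one]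
        rfl

lemma aux_integrable_comp (hθm : ∀ n, Measurable (θ n)) (hN : Measurable N)
    (hNindep : IndepFun N (fun ω => fun n => θ n ω) P)
    (ψ : E → ℝ) (hψ : Measurable ψ) (hψ0 : ∀ x, 0 ≤ ψ x)
    (hintn : ∀ n, Integrable (fun ω => ψ (θ n ω)) P)
    {w : ℕ → ℝ} (hw : ∀ n, P {ω | N ω = n} = ENNReal.ofReal (w n)) (hw0 : ∀ n, 0 ≤ w n)
    (hsum : Summable (fun n => w n * ∫ ω, ψ (θ n ω) ∂P)) :
    Integrable (fun ω => ψ (θ (N ω) ω)) P := by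
  have hmc : Measurable (fun ω => ψ (θ (N ω) ω)) := hψ.comp (aux_meas_comp hθm hN)
  refine ⟨hmc.aestronglyMeasurable, ?_⟩
  have hg : Measurable (fun x => ENNReal.ofReal (ψ x)) := ENNReal.measurable_ofReal.comp hψ
  have hkey := aux_lintegral_comp hθm hN hNindep _ hg
  have h1 : ∫⁻ ω, ‖ψ (θ (N ω) ω)‖ₑ ∂P = ∫⁻ ω, ENNReal.ofReal (ψ (θ (N ω) ω)) ∂P := by
    refine lintegral_congr fun ω => ?_
    rw [Real.enorm_eq_ofReal (hψ0 _)]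
  have h2 : ∀ n, ∫⁻ ω, ENNReal.ofReal (ψ (θ n ω)) ∂P
      = ENNReal.ofReal (∫ ω, ψ (θ n ω) ∂P) :=
    fun n => (ofReal_integral_eq_lintegral_ofReal (hintn n) (ae_of_all _ fun ω => hψ0 _)).symm
  rw [HasFiniteIntegral, h1, hkey]
  have h3 : ∑' n, P {ω | N ω = n} * ∫⁻ ω, ENNReal.ofReal (ψ (θ n ω)) ∂P
      = ENNReal.ofReal (∑' n, w n * ∫ ω, ψ (θ n ω) ∂P) := by
    rw [ENNReal.ofReal_tsum_of_nonneg
      (fun n => mul_nonneg (hw0 n) (integral_nonneg fun ω => hψ0 _)) hsum]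
    refine tsum_congr fun n => ?_
    rw [hw n, h2 n, ENNReal.ofReal_mul (hw0 n)]
  rw [h3]
  exact ENNReal.ofReal_lt_top

end Aux2
set_option maxHeartbeats 1600000 in
/-- Abstract content of the paper's Lemma B.5: bound on the expected inner
product of the aggregation error with the displacement of a geometrically
stopped semi-stochastic gradient iterate. -/
theorem error_displacement_bound
    {Ω : Type*} {mΩ : MeasurableSpace Ω} (P : Measure Ω) [IsProbabilityMeasure P]
    {d : ℕ} (ℱ : ℕ → MeasurableSpace Ω)
    (hmono : Monotone ℱ) (hle : ∀ n, ℱ n ≤ mΩ)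
    (θ : ℕ → Ω → EuclideanSpace ℝ (Fin d))
    (v : ℕ → Ω → EuclideanSpace ℝ (Fin d))
    (θ0 : EuclideanSpace ℝ (Fin d)) (η : ℝ) (hη : 0 < η)
    (hθ0 : ∀ ω, θ 0 ω = θ0)
    (hrec : ∀ n ω, θ (n + 1) ω = θ n ω + η • v n ω)
    (hadapted : ∀ n, Measurable[ℱ n] (θ n))
    (hvmeas : ∀ n, Measurable[ℱ (n + 1)] (v n))
    (hvL2 : ∀ n, MemLp (v n) 2 P)
    (F : EuclideanSpace ℝ (Fin d) → EuclideanSpace ℝ (Fin d))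
    (hF : Measurable F) (e : EuclideanSpace ℝ (Fin d)) (C : ℝ) (hC : 0 ≤ C)
    (hcond : ∀ n, P[v n|ℱ n] =ᵐ[P] fun ω => F (θ n ω) + e)
    (hcond2 : ∀ n, ∀ᵐ ω ∂P,
      MeasureTheory.condExp (ℱ n) P (fun ω' => ‖v n ω'‖ ^ 2) ω ≤
        C * ‖θ n ω - θ0‖ ^ 2 + 2 * ‖F (θ n ω)‖ ^ 2 + 2 * ‖e‖ ^ 2)
    (B : ℝ) (hB : 1 ≤ B) (N : Ω → ℕ) (hNmeas : Measurable N)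
    (hNgeom : ∀ n : ℕ,
      P {ω | N ω = n} = ENNReal.ofReal ((B / (B + 1)) ^ n * (1 - B / (B + 1))))
    (hNindep : ProbabilityTheory.IndepFun N (fun ω => fun n => θ n ω) P)
    (hint1 : Summable fun n => (B / (B + 1)) ^ n * ∫ ω, ‖θ n ω - θ0‖ ^ 2 ∂P)
    (hint2 : Summable fun n => (B / (B + 1)) ^ n * ∫ ω, ‖F (θ n ω)‖ ^ 2 ∂P) :
    -2 * η * ∫ ω, ⟪e, θ (N ω) ω - θ0⟫ ∂P ≤
      (-(1 / B) + η ^ 2 * C) * ∫ ω, ‖θ (N ω) ω - θ0‖ ^ 2 ∂P +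
        2 * η * ∫ ω, ⟪F (θ (N ω) ω), θ (N ω) ω - θ0⟫ ∂P +
        2 * η ^ 2 * ∫ ω, ‖F (θ (N ω) ω)‖ ^ 2 ∂P + 2 * η ^ 2 * ‖e‖ ^ 2 := by
  -- basic facts about the geometric parameter
  set Γ : ℝ := B / (B + 1) with hΓdef
  have hB0 : (0:ℝ) < B := lt_of_lt_of_le one_pos hB
  have hB1 : (0:ℝ) < B + 1 := by linarith
  have hΓ0 : 0 ≤ Γ := div_nonneg hB0.le hB1.le
  have hΓpos : 0 < Γ := div_pos hB0 hB1
  have hΓ1 : Γ < 1 := (div_lt_one hB1).2 (lt_add_one B)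
  set q : ℕ → ℝ := fun n => Γ ^ n * (1 - Γ) with hqdef
  have hq_eq : ∀ n, q n = Γ ^ n * (1 - Γ) := fun n => rfl
  have hq0 : ∀ n, 0 ≤ q n := fun n => mul_nonneg (pow_nonneg hΓ0 n) (by linarith)
  have hqsucc : ∀ n, q (n + 1) = Γ * q n := fun n => by
    simp only [hqdef, pow_succ]; ring
  have hqtoReal : ∀ n, (P {ω | N ω = n}).toReal = q n := fun n => by
    rw [hNgeom n, ENNReal.toReal_ofReal (hq0 n)]
  -- measurability and integrability of the process
  have hθm : ∀ n, Measurable (θ n) := fun n => (hadapted n).mono (hle n) le_rfl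
  have hθL2 : ∀ n, MemLp (θ n) 2 P := by
    intro n
    induction n with
    | zero =>
      have : θ 0 = fun _ => θ0 := funext hθ0
      rw [this]; exact memLp_const _
    | succ n ih =>
      have : θ (n + 1) = fun ω => θ n ω + η • v n ω := funext (hrec n)
      rw [this]; exact ih.add ((hvL2 n).const_smul η)
  have hgL2 : ∀ n, MemLp (fun ω => θ n ω - θ0) 2 P :=
    fun n => (hθL2 n).sub (memLp_const θ0)
  have hgm' : ∀ n, AEStronglyMeasurable[ℱ n] (fun ω => θ n ω - θ0) P := fun n =>
    StronglyMeasurable.aestronglyMeasurable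
      (Measurable.stronglyMeasurable ((hadapted n).sub measurable_const))
  have hFL2 : ∀ n, MemLp (fun ω => F (θ n ω)) 2 P := by
    intro n
    have h1 : MemLp (P[v n|ℱ n]) 2 P := aux_memℒp_condexp (hle n) (hvL2 n)
    have h2 : MemLp (fun ω => F (θ n ω) + e) 2 P := h1.ae_eq (hcond n)
    have h3 := h2.sub (memLp_const e)
    have h4 : ((fun ω => F (θ n ω) + e) - fun _ => e) = fun ω => F (θ n ω) := by
      funext ω; simp
    rwa [h4] at h3
  have hFm : ∀ n, Measurable (fun ω => F (θ n ω)) := fun n => hF.comp (hθm n)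
  -- the four real sequences
  set a : ℕ → ℝ := fun n => ∫ ω, ‖θ n ω - θ0‖ ^ 2 ∂P with hadef
  set b : ℕ → ℝ := fun n => ∫ ω, ⟪e, θ n ω - θ0⟫ ∂P with hbdef
  set c : ℕ → ℝ := fun n => ∫ ω, ⟪F (θ n ω), θ n ω - θ0⟫ ∂P with hcdef
  set f : ℕ → ℝ := fun n => ∫ ω, ‖F (θ n ω)‖ ^ 2 ∂P with hfdef
  have ha_eq : ∀ n, a n = ∫ ω, ‖θ n ω - θ0‖ ^ 2 ∂P := fun n => rfl
  have hb_eq : ∀ n, b n = ∫ ω, ⟪e, θ n ω - θ0⟫ ∂P := fun n => rfl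
  have hc_eq : ∀ n, c n = ∫ ω, ⟪F (θ n ω), θ n ω - θ0⟫ ∂P := fun n => rfl
  have hf_eq : ∀ n, f n = ∫ ω, ‖F (θ n ω)‖ ^ 2 ∂P := fun n => rfl
  have Ia : ∀ n, Integrable (fun ω => ‖θ n ω - θ0‖ ^ 2) P :=
    fun n => aux_integrable_sq_norm (hgL2 n)
  have Ib : ∀ n, Integrable (fun ω => ⟪e, θ n ω - θ0⟫) P :=
    fun n => aux_integrable_inner (memLp_const e) (hgL2 n)
  have Ic : ∀ n, Integrable (fun ω => ⟪F (θ n ω), θ n ω - θ0⟫) P :=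
    fun n => aux_integrable_inner (hFL2 n) (hgL2 n)
  have If : ∀ n, Integrable (fun ω => ‖F (θ n ω)‖ ^ 2) P :=
    fun n => aux_integrable_sq_norm (hFL2 n)
  have Iv : ∀ n, Integrable (fun ω => ‖v n ω‖ ^ 2) P :=
    fun n => aux_integrable_sq_norm (hvL2 n)
  have ha0 : a 0 = 0 := by
    simp only [hadef]
    have : ∀ ω, ‖θ 0 ω - θ0‖ ^ 2 = 0 := fun ω => by rw [hθ0 ω]; simp
    rw [funext this]; simp
  have hanneg : ∀ n, 0 ≤ a n := fun n => integral_nonneg fun ω => sq_nonneg _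
  have hfnneg : ∀ n, 0 ≤ f n := fun n => integral_nonneg fun ω => sq_nonneg _
  -- the per-step inequality
  have key : ∀ n, a (n + 1) ≤
      a n + 2 * η * (c n + b n) + η ^ 2 * (C * a n + 2 * f n + 2 * ‖e‖ ^ 2) := by
    intro n
    have Iinner : Integrable (fun ω => ⟪θ n ω - θ0, v n ω⟫) P :=
      aux_integrable_inner (hgL2 n) (hvL2 n)
    have step1 : a (n + 1) = a n + 2 * η * (∫ ω, ⟪θ n ω - θ0, v n ω⟫ ∂P)
        + η ^ 2 * ∫ ω, ‖v n ω‖ ^ 2 ∂P := by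
      have hpt : ∀ ω, ‖θ (n + 1) ω - θ0‖ ^ 2
          = ‖θ n ω - θ0‖ ^ 2 + 2 * η * ⟪θ n ω - θ0, v n ω⟫ + η ^ 2 * ‖v n ω‖ ^ 2 := by
        intro ω
        rw [hrec n ω, show θ n ω + η • v n ω - θ0 = (θ n ω - θ0) + η • v n ω by abel]
        rw [@norm_add_sq_real, real_inner_smul_right, norm_smul]
        simp only [Real.norm_eq_abs, mul_pow, sq_abs]
        ring
      have : a (n + 1) = ∫ ω, (‖θ n ω - θ0‖ ^ 2 + 2 * η * ⟪θ n ω - θ0, v n ω⟫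
          + η ^ 2 * ‖v n ω‖ ^ 2) ∂P := by
        simp only [hadef]
        exact integral_congr_ae (ae_of_all _ hpt)
      have I1 : Integrable (fun ω => ‖θ n ω - θ0‖ ^ 2 + 2 * η * ⟪θ n ω - θ0, v n ω⟫) P :=
        (Ia n).add (Iinner.const_mul (2 * η))
      have I2 : Integrable (fun ω => 2 * η * ⟪θ n ω - θ0, v n ω⟫) P :=
        Iinner.const_mul (2 * η)
      have I3 : Integrable (fun ω => η ^ 2 * ‖v n ω‖ ^ 2) P := (Iv n).const_mul (η ^ 2)
      rw [this, integral_add I1 I3, integral_add (Ia n) I2,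
        integral_const_mul, integral_const_mul]
    have step2 : ∫ ω, ⟪θ n ω - θ0, v n ω⟫ ∂P = c n + b n := by
      have h1 := aux_integral_inner_condexp (hle n) (hvL2 n) (hgL2 n) (hgm' n)
      have h2 : ∫ ω, ⟪θ n ω - θ0, (P[v n|ℱ n]) ω⟫ ∂P
          = ∫ ω, ⟪θ n ω - θ0, F (θ n ω) + e⟫ ∂P := by
        refine integral_congr_ae ?_
        filter_upwards [hcond n] with ω hω
        rw [hω]
      have h3 : ∀ ω, ⟪θ n ω - θ0, F (θ n ω) + e⟫
          = ⟪F (θ n ω), θ n ω - θ0⟫ + ⟪e, θ n ω - θ0⟫ := by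
        intro ω
        rw [inner_add_right, real_inner_comm (θ n ω - θ0) e,
          real_inner_comm (θ n ω - θ0) (F (θ n ω))]
      rw [h1, h2, integral_congr_ae (ae_of_all _ h3), integral_add (Ic n) (Ib n)]
    have step3 : ∫ ω, ‖v n ω‖ ^ 2 ∂P ≤ C * a n + 2 * f n + 2 * ‖e‖ ^ 2 := by
      haveI : SigmaFinite (P.trim (hle n)) := (isFiniteMeasure_trim (hle n)).toSigmaFinite
      have h0 : ∫ ω, ‖v n ω‖ ^ 2 ∂P
          = ∫ ω, (MeasureTheory.condExp (ℱ n) P (fun ω' => ‖v n ω'‖ ^ 2)) ω ∂P :=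
        (integral_condExp (hle n)).symm
      have hRint : Integrable (fun ω => C * ‖θ n ω - θ0‖ ^ 2 + 2 * ‖F (θ n ω)‖ ^ 2
          + 2 * ‖e‖ ^ 2) P :=
        (((Ia n).const_mul C).add ((If n).const_mul 2)).add (integrable_const _)
      have h4 : ∫ ω, (MeasureTheory.condExp (ℱ n) P (fun ω' => ‖v n ω'‖ ^ 2)) ω ∂P
          ≤ ∫ ω, (C * ‖θ n ω - θ0‖ ^ 2 + 2 * ‖F (θ n ω)‖ ^ 2 + 2 * ‖e‖ ^ 2) ∂P :=
        integral_mono_ae integrable_condExp hRint (hcond2 n)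
      have h5 : ∫ ω, (C * ‖θ n ω - θ0‖ ^ 2 + 2 * ‖F (θ n ω)‖ ^ 2 + 2 * ‖e‖ ^ 2) ∂P
          = C * a n + 2 * f n + 2 * ‖e‖ ^ 2 := by
        have I1 : Integrable (fun ω => C * ‖θ n ω - θ0‖ ^ 2 + 2 * ‖F (θ n ω)‖ ^ 2) P :=
          ((Ia n).const_mul C).add ((If n).const_mul 2)
        have I2 : Integrable (fun ω => 2 * ‖F (θ n ω)‖ ^ 2) P := (If n).const_mul 2
        rw [integral_add I1 (integrable_const _),
          integral_add ((Ia n).const_mul C) I2,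
          integral_const_mul, integral_const_mul, integral_const]
        simp only [measure_univ, ENNReal.toReal_one, smul_eq_mul, one_mul, probReal_univ]
        rfl
      rw [h0]
      rw [h5] at h4
      exact h4
    have hη2 : (0:ℝ) ≤ η ^ 2 := sq_nonneg η
    calc a (n + 1) = a n + 2 * η * (∫ ω, ⟪θ n ω - θ0, v n ω⟫ ∂P)
          + η ^ 2 * ∫ ω, ‖v n ω‖ ^ 2 ∂P := step1
      _ = a n + 2 * η * (c n + b n) + η ^ 2 * ∫ ω, ‖v n ω‖ ^ 2 ∂P := by rw [step2]
      _ ≤ a n + 2 * η * (c n + b n) + η ^ 2 * (C * a n + 2 * f n + 2 * ‖e‖ ^ 2) := by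
          have := mul_le_mul_of_nonneg_left step3 hη2
          linarith
  -- summability
  have Sq : Summable q := by
    refine ((summable_geometric_of_lt_one hΓ0 hΓ1).mul_right (1 - Γ)).congr fun n => ?_
    rw [hq_eq]
  have Sa : Summable (fun n => q n * a n) := by
    refine (hint1.mul_left (1 - Γ)).congr fun n => ?_
    rw [hq_eq, ha_eq]; ring
  have Sf : Summable (fun n => q n * f n) := by
    refine (hint2.mul_left (1 - Γ)).congr fun n => ?_
    rw [hq_eq, hf_eq]; ring
  have habs_b : ∀ n, |b n| ≤ ‖e‖ * (1 + a n) := by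
    intro n
    have h1 : |b n| ≤ ∫ ω, |⟪e, θ n ω - θ0⟫| ∂P := by
      rw [hb_eq]
      simpa only [Real.norm_eq_abs] using
        norm_integral_le_integral_norm (μ := P) (f := fun ω => ⟪e, θ n ω - θ0⟫)
    have h2 : ∫ ω, |⟪e, θ n ω - θ0⟫| ∂P ≤ ∫ ω, ‖e‖ * (1 + ‖θ n ω - θ0‖ ^ 2) ∂P := by
      refine integral_mono_ae ((Ib n).abs) ?_ (ae_of_all _ fun ω => ?_)
      · exact ((integrable_const (1:ℝ)).add (Ia n)).const_mul ‖e‖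
      · show |⟪e, θ n ω - θ0⟫| ≤ ‖e‖ * (1 + ‖θ n ω - θ0‖ ^ 2)
        have := abs_real_inner_le_norm e (θ n ω - θ0)
        nlinarith [norm_nonneg (θ n ω - θ0), norm_nonneg e, sq_nonneg (1 - ‖θ n ω - θ0‖)]
    have h3 : ∫ ω, ‖e‖ * (1 + ‖θ n ω - θ0‖ ^ 2) ∂P = ‖e‖ * (1 + a n) := by
      rw [integral_const_mul, integral_add (integrable_const _) (Ia n), integral_const]
      simp only [measure_univ, ENNReal.toReal_one, smul_eq_mul, one_mul, probReal_univ]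
      rfl
    linarith
  have habs_c : ∀ n, |c n| ≤ f n + a n := by
    intro n
    have h1 : |c n| ≤ ∫ ω, |⟪F (θ n ω), θ n ω - θ0⟫| ∂P := by
      rw [hc_eq]
      simpa only [Real.norm_eq_abs] using
        norm_integral_le_integral_norm (μ := P) (f := fun ω => ⟪F (θ n ω), θ n ω - θ0⟫)
    have h2 : ∫ ω, |⟪F (θ n ω), θ n ω - θ0⟫| ∂P
        ≤ ∫ ω, (‖F (θ n ω)‖ ^ 2 + ‖θ n ω - θ0‖ ^ 2) ∂P := by
      refine integral_mono_ae ((Ic n).abs) ((If n).add (Ia n)) (ae_of_all _ fun ω => ?_)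
      show |⟪F (θ n ω), θ n ω - θ0⟫| ≤ ‖F (θ n ω)‖ ^ 2 + ‖θ n ω - θ0‖ ^ 2
      have := abs_real_inner_le_norm (F (θ n ω)) (θ n ω - θ0)
      nlinarith [norm_nonneg (θ n ω - θ0), norm_nonneg (F (θ n ω)),
        sq_nonneg (‖F (θ n ω)‖ - ‖θ n ω - θ0‖)]
    have h3 : ∫ ω, (‖F (θ n ω)‖ ^ 2 + ‖θ n ω - θ0‖ ^ 2) ∂P = f n + a n :=
      integral_add (If n) (Ia n)
    linarith
  have Sb : Summable (fun n => q n * b n) := by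
    have Smaj : Summable (fun n => ‖e‖ * q n + ‖e‖ * (q n * a n)) :=
      (Sq.mul_left ‖e‖).add (Sa.mul_left ‖e‖)
    refine Summable.of_abs (Summable.of_nonneg_of_le (fun n => abs_nonneg _)
      (fun n => ?_) Smaj)
    rw [abs_mul, abs_of_nonneg (hq0 n)]
    calc q n * |b n| ≤ q n * (‖e‖ * (1 + a n)) :=
          mul_le_mul_of_nonneg_left (habs_b n) (hq0 n)
      _ = ‖e‖ * q n + ‖e‖ * (q n * a n) := by ring
  have Sc : Summable (fun n => q n * c n) := by
    have Smaj : Summable (fun n => q n * f n + q n * a n) := Sf.add Sa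
    refine Summable.of_abs (Summable.of_nonneg_of_le (fun n => abs_nonneg _)
      (fun n => ?_) Smaj)
    rw [abs_mul, abs_of_nonneg (hq0 n)]
    calc q n * |c n| ≤ q n * (f n + a n) := mul_le_mul_of_nonneg_left (habs_c n) (hq0 n)
      _ = q n * f n + q n * a n := by ring
  have Sa1 : Summable (fun n => q n * a (n + 1)) := by
    have h1 : Summable (fun n => q (n + 1) * a (n + 1)) := (_root_.summable_nat_add_iff 1).2 Sa
    refine (h1.mul_left Γ⁻¹).congr fun n => ?_
    rw [hqsucc n]
    field_simp
  -- transfer to the stopped quantities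
  have IΘa : Integrable (fun ω => ‖θ (N ω) ω - θ0‖ ^ 2) P := by
    refine aux_integrable_comp hθm hNmeas hNindep (fun x => ‖x - θ0‖ ^ 2)
      ((measurable_id.sub measurable_const).norm.pow measurable_const)
      (fun x => sq_nonneg _) Ia hNgeom hq0 ?_
    exact Sa
  have IΘf : Integrable (fun ω => ‖F (θ (N ω) ω)‖ ^ 2) P := by
    refine aux_integrable_comp hθm hNmeas hNindep (fun x => ‖F x‖ ^ 2)
      ((hF.norm).pow measurable_const) (fun x => sq_nonneg _) If hNgeom hq0 ?_
    exact Sf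
  have hΘm : Measurable (fun ω => θ (N ω) ω) := aux_meas_comp hθm hNmeas
  have IΘb : Integrable (fun ω => ⟪e, θ (N ω) ω - θ0⟫) P := by
    refine Integrable.mono' (((integrable_const (1:ℝ)).add IΘa).const_mul ‖e‖)
      ((measurable_const.inner (hΘm.sub measurable_const)).aestronglyMeasurable)
      (ae_of_all _ fun ω => ?_)
    have := abs_real_inner_le_norm e (θ (N ω) ω - θ0)
    rw [Real.norm_eq_abs]
    simp only [Pi.add_apply]
    nlinarith [norm_nonneg (θ (N ω) ω - θ0), norm_nonneg e,
      sq_nonneg (1 - ‖θ (N ω) ω - θ0‖)]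
  have IΘc : Integrable (fun ω => ⟪F (θ (N ω) ω), θ (N ω) ω - θ0⟫) P := by
    refine Integrable.mono' (IΘf.add IΘa)
      (((hF.comp hΘm).inner (hΘm.sub measurable_const)).aestronglyMeasurable)
      (ae_of_all _ fun ω => ?_)
    have := abs_real_inner_le_norm (F (θ (N ω) ω)) (θ (N ω) ω - θ0)
    rw [Real.norm_eq_abs]
    simp only [Pi.add_apply]
    nlinarith [norm_nonneg (θ (N ω) ω - θ0), norm_nonneg (F (θ (N ω) ω)),
      sq_nonneg (‖F (θ (N ω) ω)‖ - ‖θ (N ω) ω - θ0‖)]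
  have TA : ∫ ω, ‖θ (N ω) ω - θ0‖ ^ 2 ∂P = ∑' n, q n * a n := by
    have h := aux_integral_comp hθm hNmeas hNindep (fun x => ‖x - θ0‖ ^ 2)
      ((measurable_id.sub measurable_const).norm.pow measurable_const) IΘa Ia
    exact h.trans (tsum_congr fun n => by rw [hqtoReal, ha_eq])
  have TB : ∫ ω, ⟪e, θ (N ω) ω - θ0⟫ ∂P = ∑' n, q n * b n := by
    have h := aux_integral_comp hθm hNmeas hNindep (fun x => ⟪e, x - θ0⟫)
      (measurable_const.inner (measurable_id.sub measurable_const)) IΘb Ib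
    exact h.trans (tsum_congr fun n => by rw [hqtoReal, hb_eq])
  have TC : ∫ ω, ⟪F (θ (N ω) ω), θ (N ω) ω - θ0⟫ ∂P = ∑' n, q n * c n := by
    have h := aux_integral_comp hθm hNmeas hNindep (fun x => ⟪F x, x - θ0⟫)
      (hF.inner (measurable_id.sub measurable_const)) IΘc Ic
    exact h.trans (tsum_congr fun n => by rw [hqtoReal, hc_eq])
  have TF : ∫ ω, ‖F (θ (N ω) ω)‖ ^ 2 ∂P = ∑' n, q n * f n := by
    have h := aux_integral_comp hθm hNmeas hNindep (fun x => ‖F x‖ ^ 2)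
      ((hF.norm).pow measurable_const) IΘf If
    exact h.trans (tsum_congr fun n => by rw [hqtoReal, hf_eq])
  -- the telescoping identity
  have htel : ∑' n, q n * a (n + 1) = Γ⁻¹ * ∑' n, q n * a n := by
    have h1 : ∀ n, q n * a (n + 1) = Γ⁻¹ * (q (n + 1) * a (n + 1)) := by
      intro n; rw [hqsucc n]; field_simp
    rw [tsum_congr h1, tsum_mul_left]
    congr 1
    have h2 := Summable.tsum_eq_zero_add Sa
    rw [h2, ha0]
    ring
  have hq1 : ∑' n, q n = 1 := by
    rw [tsum_congr hq_eq, tsum_mul_right, tsum_geometric_of_lt_one hΓ0 hΓ1]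
    rw [inv_mul_cancel₀ (by linarith : (1:ℝ) - Γ ≠ 0)]
  -- summing the per-step inequality
  have key2 : ∀ n, -2 * η * (q n * b n) ≤
      (q n * a n - q n * a (n + 1)) + η ^ 2 * C * (q n * a n) + 2 * η * (q n * c n)
        + 2 * η ^ 2 * (q n * f n) + 2 * η ^ 2 * ‖e‖ ^ 2 * q n := by
    intro n
    have h := mul_le_mul_of_nonneg_left (key n) (hq0 n)
    nlinarith [h]
  have hsumR : Summable (fun n => (q n * a n - q n * a (n + 1)) + η ^ 2 * C * (q n * a n)
      + 2 * η * (q n * c n) + 2 * η ^ 2 * (q n * f n) + 2 * η ^ 2 * ‖e‖ ^ 2 * q n) :=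
    ((((Sa.sub Sa1).add (Sa.mul_left (η ^ 2 * C))).add (Sc.mul_left (2 * η))).add
      (Sf.mul_left (2 * η ^ 2))).add (Sq.mul_left (2 * η ^ 2 * ‖e‖ ^ 2))
  have hmain := Summable.tsum_le_tsum key2 (Sb.mul_left (-2 * η)) hsumR
  rw [tsum_mul_left] at hmain
  have hR : ∑' n, ((q n * a n - q n * a (n + 1)) + η ^ 2 * C * (q n * a n)
      + 2 * η * (q n * c n) + 2 * η ^ 2 * (q n * f n) + 2 * η ^ 2 * ‖e‖ ^ 2 * q n)
      = ((∑' n, q n * a n) - Γ⁻¹ * ∑' n, q n * a n) + η ^ 2 * C * (∑' n, q n * a n)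
        + 2 * η * (∑' n, q n * c n) + 2 * η ^ 2 * (∑' n, q n * f n)
        + 2 * η ^ 2 * ‖e‖ ^ 2 * 1 := by
    rw [Summable.tsum_add ((((Sa.sub Sa1).add (Sa.mul_left (η ^ 2 * C))).add (Sc.mul_left (2 * η))).add
        (Sf.mul_left (2 * η ^ 2))) (Sq.mul_left (2 * η ^ 2 * ‖e‖ ^ 2)),
      Summable.tsum_add (((Sa.sub Sa1).add (Sa.mul_left (η ^ 2 * C))).add (Sc.mul_left (2 * η)))
        (Sf.mul_left (2 * η ^ 2)),
      Summable.tsum_add ((Sa.sub Sa1).add (Sa.mul_left (η ^ 2 * C))) (Sc.mul_left (2 * η)),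
      Summable.tsum_add (Sa.sub Sa1) (Sa.mul_left (η ^ 2 * C)),
      Summable.tsum_sub Sa Sa1, htel, tsum_mul_left, tsum_mul_left, tsum_mul_left, tsum_mul_left, hq1]
  rw [hR] at hmain
  -- conclude
  rw [TA, TB, TC, TF]
  have hΓinv : Γ⁻¹ = (B + 1) / B := by
    rw [hΓdef]; rw [inv_div]
  have hcoef : (1:ℝ) - Γ⁻¹ = -(1 / B) := by
    rw [hΓinv]; field_simp; ring
  have heq : (∑' n, q n * a n) - Γ⁻¹ * (∑' n, q n * a n)
      = -(1 / B) * (∑' n, q n * a n) := by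
    rw [← hcoef]; ring
  rw [heq] at hmain
  linarith
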